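/- arXiv:1806.06603 — 3 statements merged into one kernel-verified Lean document; each statement's English description precedes it below -/
import Mathlib

section
/- The permutation x̄ y̅ of P^1(F_17) (a set of 18 points), where x̄ is induced by X(z) = (z+10)/(10z-1) and y̅ by Y(z) = 4/(4z+8), has exactly two orbits under the cyclic group it generates, each of size 9. -/
open OnePoint

instance : Fact (Nat.Prime 17) := ⟨by norm_num⟩

/-- The Möbius transformation `z ↦ (a z + b)/(c z + d)` on the projective line
`P¹(F₁₇) = F₁₇ ∪ {∞}`. -/
def mob (a b c d : ZMod 17) (w : OnePoint (ZMod 17)) : OnePoint (ZMod 17) :=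
  match w with
  | ∞ => if c = 0 then ∞ else OnePoint.some (a / c)
  | OnePoint.some z =>
      if c * z + d = 0 then ∞ else OnePoint.some ((a * z + b) / (c * z + d))

instance : DecidableEq (OnePoint (ZMod 17)) :=
  inferInstanceAs (DecidableEq (Option (ZMod 17)))

lemma inv17 (a : ZMod 17) : a⁻¹ = a ^ 15 := by
  rcases eq_or_ne a 0 with rfl | h
  · simp [zero_pow]
  · have h16 : a ^ 16 = 1 := by
      have := ZMod.pow_card_sub_one_eq_one (p := 17) h
      norm_num at this
      exact this
    refine (inv_eq_of_mul_eq_one_right ?_)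
    calc a * a ^ 15 = a ^ 16 := by ring
      _ = 1 := h16

/-- A computable (kernel-reducible) version of `mob`, using `x ^ 15` for `x⁻¹`. -/
def mob' (a b c d : ZMod 17) (w : OnePoint (ZMod 17)) : OnePoint (ZMod 17) :=
  match w with
  | ∞ => if c = 0 then ∞ else OnePoint.some (a * c ^ 15)
  | OnePoint.some z =>
      if c * z + d = 0 then ∞ else OnePoint.some ((a * z + b) * (c * z + d) ^ 15)

lemma mob_eq (a b c d : ZMod 17) (w : OnePoint (ZMod 17)) :
    mob a b c d w = mob' a b c d w := by
  match w with
  | ∞ => simp [mob, mob', div_eq_mul_inv, inv17]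
  | OnePoint.some z => simp [mob, mob', div_eq_mul_inv, inv17]

def F : OnePoint (ZMod 17) → OnePoint (ZMod 17) :=
  fun z => mob' 0 4 4 8 (mob' 1 10 10 (-1) z)

def G : OnePoint (ZMod 17) → OnePoint (ZMod 17) :=
  fun z => mob' 15 4 1 6 z

lemma hGF : ∀ z, G (F z) = z := by decide
lemma hFG : ∀ z, F (G z) = z := by decide
lemma hF9 : ∀ z, F^[9] z = z := by decide
lemma hF3 : ∀ z, F^[3] z ≠ z := by decide
lemma hF1 : ∀ z, F z ≠ z := by decide

lemma minper (z : OnePoint (ZMod 17)) : Function.minimalPeriod F z = 9 := by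
  have hper : Function.IsPeriodicPt F 9 z := hF9 z
  have hd : Function.minimalPeriod F z ∣ 9 := hper.minimalPeriod_dvd
  have h3 : ¬ Function.minimalPeriod F z ∣ 3 := by
    intro h
    exact hF3 z ((Function.isPeriodicPt_iff_minimalPeriod_dvd).mpr h)
  have hd' : Function.minimalPeriod F z ∣ 3 ^ 2 := by norm_num; exact hd
  rcases (Nat.dvd_prime_pow (by norm_num : Nat.Prime 3)).mp hd' with ⟨k, hk, he⟩
  interval_cases k
  · exact absurd (by simp [he] : Function.minimalPeriod F z ∣ 3) h3
  · exact absurd (by simp [he] : Function.minimalPeriod F z ∣ 3) h3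
  · simpa using he

/-- The permutation of the 18 points of `P¹(F₁₇)` composed from
`X(z) = (z+10)/(10z-1)` and `Y(z) = 4/(4z+8)` has exactly two orbits, each of size 9. -/
theorem stmt_5 :
    ∃ σ : Equiv.Perm (OnePoint (ZMod 17)),
      (∀ z, σ z = mob 0 4 4 8 (mob 1 10 10 (-1) z)) ∧
      Nat.card (Quotient (MulAction.orbitRel (Subgroup.zpowers σ) (OnePoint (ZMod 17)))) = 2 ∧
      ∀ z : OnePoint (ZMod 17),
        Nat.card (MulAction.orbit (Subgroup.zpowers σ) z) = 9 := by
  classical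
  set σ : Equiv.Perm (OnePoint (ZMod 17)) := ⟨F, G, hGF, hFG⟩ with hσ
  have hcoe : ⇑σ = F := rfl
  have hmp : ∀ z : OnePoint (ZMod 17), Function.minimalPeriod (σ • ·) z = 9 := by
    intro z
    exact minper z
  have horb : ∀ z : OnePoint (ZMod 17),
      Nat.card (MulAction.orbit (Subgroup.zpowers σ) z) = 9 := by
    intro z
    rw [Nat.card_congr (MulAction.orbitZPowersEquiv σ z), hmp z]
    simp [Nat.card_eq_fintype_card, ZMod.card]
  refine ⟨σ, ?_, ?_, horb⟩
  · intro z
    show F z = _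
    rw [mob_eq 1 10 10 (-1) z, mob_eq]
    rfl
  · haveI : ∀ ω : MulAction.orbitRel.Quotient (Subgroup.zpowers σ) (OnePoint (ZMod 17)),
        Fintype (MulAction.orbit (Subgroup.zpowers σ) ω.out) := fun _ => Fintype.ofFinite _
    haveI : Fintype
        (Quotient (MulAction.orbitRel (Subgroup.zpowers σ) (OnePoint (ZMod 17)))) :=
      Fintype.ofFinite _
    have e := MulAction.selfEquivSigmaOrbits (Subgroup.zpowers σ) (OnePoint (ZMod 17))
    have h18 : Fintype.card (OnePoint (ZMod 17)) = 18 := by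
      have h : Fintype.card (OnePoint (ZMod 17)) = Fintype.card (Option (ZMod 17)) :=
        Fintype.card_congr (Equiv.refl _)
      rw [h, Fintype.card_option, ZMod.card]
    have hc := Fintype.card_congr e
    rw [Fintype.card_sigma, h18] at hc
    have hterm : ∀ ω : MulAction.orbitRel.Quotient (Subgroup.zpowers σ) (OnePoint (ZMod 17)),
        Fintype.card (MulAction.orbit (Subgroup.zpowers σ) ω.out) = 9 := by
      intro ω
      rw [← Nat.card_eq_fintype_card]
      exact horb _
    rw [Finset.sum_congr rfl (fun ω _ => hterm ω), Finset.sum_const, smul_eq_mul] at hc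
    rw [Nat.card_eq_fintype_card]
    have : Finset.univ.card = Fintype.card
        (Quotient (MulAction.orbitRel (Subgroup.zpowers σ) (OnePoint (ZMod 17)))) := rfl
    omega
end

section
/- For every even integer k ≥ 2, the permutations x = (1, 3k/2+1)(k/2+1, k+1) and y = (1,2,…,k)(k+1,k+2,…,2k) of the set {1,…,2k} satisfy: x has order 2, y has order k, and the group generated by xy acts on {1,…,2k} with exactly two orbits. -/
/-- `x = (1, 3k/2+1)(k/2+1, k+1)` as a permutation of `ℕ`. -/
def xPerm (k : ℕ) : Equiv.Perm ℕ :=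
  Equiv.swap 1 (3 * k / 2 + 1) * Equiv.swap (k / 2 + 1) (k + 1)

/-- `y = (1,2,…,k)(k+1,k+2,…,2k)` as a permutation of `ℕ`. -/
def yPerm (k : ℕ) : Equiv.Perm ℕ :=
  (List.range' 1 k).formPerm * (List.range' (k + 1) k).formPerm

private lemma fix_pow {f : Equiv.Perm ℕ} {a : ℕ} (h : f a = a) : ∀ n : ℕ, (f ^ n) a = a := by
  intro n
  induction n with
  | zero => rfl
  | succ n ih => rw [pow_succ, Equiv.Perm.mul_apply, h, ih]

private lemma rfp (s n a j : ℕ) (hn : 0 < n) (h1 : s ≤ a) (h2 : a < s + n) :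
    ((List.range' s n).formPerm ^ j) a = s + ((a - s + j) % n) := by
  have hi : a - s < (List.range' s n).length := by rw [List.length_range']; omega
  have key := List.formPerm_pow_apply_getElem (List.range' s n) (List.nodup_range' (s := s) (n := n)) j
    (a - s) hi
  simp only [List.getElem_range'_1, List.length_range'] at key
  rw [show s + (a - s) = a from by omega] at key
  exact key

private lemma rfa (s n a : ℕ) (hn : 0 < n) (h1 : s ≤ a) (h2 : a < s + n) :
    (List.range' s n).formPerm a = s + ((a - s + 1) % n) := by
  have := rfp s n a 1 hn h1 h2
  rwa [pow_one] at this

/-- For even `k ≥ 2`: `x` has order 2, `y` has order `k`, and `⟨xy⟩` has exactly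
two orbits on `{1,…,2k}`. -/
theorem stmt_6 (k : ℕ) (hk : 2 ≤ k) (hk2 : Even k) :
    orderOf (xPerm k) = 2 ∧ orderOf (yPerm k) = k ∧
    ∃ a b, a ∈ Set.Icc 1 (2 * k) ∧ b ∈ Set.Icc 1 (2 * k) ∧
      (¬ ∃ n : ℤ, ((xPerm k * yPerm k) ^ n) a = b) ∧
      ∀ c ∈ Set.Icc 1 (2 * k),
        (∃ n : ℤ, ((xPerm k * yPerm k) ^ n) a = c) ∨
        (∃ n : ℤ, ((xPerm k * yPerm k) ^ n) b = c) := by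
  obtain ⟨m, hm⟩ := hk2
  have hm1 : 1 ≤ m := by omega
  have hx : xPerm k = Equiv.swap 1 (3*m+1) * Equiv.swap (m+1) (2*m+1) := by
    rw [xPerm, show 3*k/2+1 = 3*m+1 from by omega, show k/2+1 = m+1 from by omega,
      show k+1 = 2*m+1 from by omega]
  -- y step lemmas
  have YA : ∀ a, 1 ≤ a → a < 2*m → yPerm k a = a + 1 := by
    intro a h1 h2
    simp only [yPerm, Equiv.Perm.mul_apply]
    rw [List.formPerm_apply_of_notMem (l := List.range' (k+1) k) (x := a)
        (by rw [List.mem_range'_1]; omega),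
      rfa 1 k a (by omega) (by omega) (by omega),
      show a - 1 + 1 = a from by omega, Nat.mod_eq_of_lt (by omega)]
    omega
  have YAk : yPerm k (2*m) = 1 := by
    simp only [yPerm, Equiv.Perm.mul_apply]
    rw [List.formPerm_apply_of_notMem (l := List.range' (k+1) k) (x := 2*m)
        (by rw [List.mem_range'_1]; omega),
      rfa 1 k (2*m) (by omega) (by omega) (by omega),
      show 2*m - 1 + 1 = k from by omega, Nat.mod_self]
  have YB : ∀ a, 2*m+1 ≤ a → a < 4*m → yPerm k a = a + 1 := by
    intro a h1 h2
    simp only [yPerm, Equiv.Perm.mul_apply]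
    rw [rfa (k+1) k a (by omega) (by omega) (by omega),
      show a - (k+1) + 1 = a - k from by omega, Nat.mod_eq_of_lt (by omega),
      List.formPerm_apply_of_notMem (by rw [List.mem_range'_1]; omega)]
    omega
  have YBk : yPerm k (4*m) = 2*m+1 := by
    simp only [yPerm, Equiv.Perm.mul_apply]
    rw [rfa (k+1) k (4*m) (by omega) (by omega) (by omega),
      show 4*m - (k+1) + 1 = k from by omega, Nat.mod_self,
      List.formPerm_apply_of_notMem (by rw [List.mem_range'_1]; omega)]
    omega
  set z := xPerm k * yPerm k with hz
  -- z step lemmas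
  have Z1 : ∀ a, 1 ≤ a → a < 2*m → a ≠ m → z a = a + 1 := by
    intro a h1 h2 h3
    rw [hz, Equiv.Perm.mul_apply, YA a h1 h2, hx, Equiv.Perm.mul_apply,
      Equiv.swap_apply_of_ne_of_ne (a := m+1) (b := 2*m+1) (x := a+1) (by omega) (by omega),
      Equiv.swap_apply_of_ne_of_ne (a := 1) (b := 3*m+1) (x := a+1) (by omega) (by omega)]
  have Z2 : z m = 2*m + 1 := by
    rw [hz, Equiv.Perm.mul_apply, YA m (by omega) (by omega), hx, Equiv.Perm.mul_apply,
      Equiv.swap_apply_left,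
      Equiv.swap_apply_of_ne_of_ne (a := 1) (b := 3*m+1) (x := 2*m+1) (by omega) (by omega)]
  have Z3 : z (2*m) = 3*m + 1 := by
    rw [hz, Equiv.Perm.mul_apply, YAk, hx, Equiv.Perm.mul_apply,
      Equiv.swap_apply_of_ne_of_ne (a := m+1) (b := 2*m+1) (x := 1) (by omega) (by omega),
      Equiv.swap_apply_left]
  have Z4 : ∀ a, 2*m+1 ≤ a → a < 4*m → a ≠ 3*m → z a = a + 1 := by
    intro a h1 h2 h3
    rw [hz, Equiv.Perm.mul_apply, YB a h1 h2, hx, Equiv.Perm.mul_apply,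
      Equiv.swap_apply_of_ne_of_ne (a := m+1) (b := 2*m+1) (x := a+1) (by omega) (by omega),
      Equiv.swap_apply_of_ne_of_ne (a := 1) (b := 3*m+1) (x := a+1) (by omega) (by omega)]
  have Z5 : z (3*m) = 1 := by
    rw [hz, Equiv.Perm.mul_apply, YB (3*m) (by omega) (by omega), hx, Equiv.Perm.mul_apply,
      Equiv.swap_apply_of_ne_of_ne (a := m+1) (b := 2*m+1) (x := 3*m+1) (by omega) (by omega),
      Equiv.swap_apply_right]
  have Z6 : z (4*m) = m + 1 := by
    rw [hz, Equiv.Perm.mul_apply, YBk, hx, Equiv.Perm.mul_apply,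
      Equiv.swap_apply_right,
      Equiv.swap_apply_of_ne_of_ne (a := 1) (b := 3*m+1) (x := m+1) (by omega) (by omega)]
  -- iteration formulas
  have SA : ∀ j, j ≤ 2*m → (z ^ j) 1 = if j < m then 1 + j else if j < 2*m then m+1+j else 1 := by
    intro j
    induction j with
    | zero => intro _; rw [if_pos (by omega)]; rfl
    | succ j ih =>
      intro hj
      have ihj := ih (by omega)
      by_cases h1 : j + 1 < m
      · have hv : (z ^ j) 1 = 1 + j := by rw [ihj, if_pos (by omega)]
        rw [pow_succ', Equiv.Perm.mul_apply, hv, Z1 (1+j) (by omega) (by omega) (by omega),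
          if_pos h1]
        omega
      · by_cases h2 : j + 1 = m
        · have hv : (z ^ j) 1 = m := by rw [ihj, if_pos (by omega)]; omega
          rw [pow_succ', Equiv.Perm.mul_apply, hv, Z2, if_neg (by omega), if_pos (by omega)]
          omega
        · by_cases h3 : j + 1 < 2*m
          · have hv : (z ^ j) 1 = m+1+j := by rw [ihj, if_neg (by omega), if_pos (by omega)]
            rw [pow_succ', Equiv.Perm.mul_apply, hv,
              Z4 (m+1+j) (by omega) (by omega) (by omega), if_neg (by omega), if_pos h3]
            omega
          · have hv : (z ^ j) 1 = 3*m := by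
              rw [ihj, if_neg (by omega), if_pos (by omega)]; omega
            rw [pow_succ', Equiv.Perm.mul_apply, hv, Z5, if_neg (by omega), if_neg (by omega)]
  have SB : ∀ j, j ≤ 2*m →
      (z ^ j) (m+1) = if j < m then m+1+j else if j < 2*m then 2*m+1+j else m+1 := by
    intro j
    induction j with
    | zero => intro _; rw [if_pos (by omega)]; rfl
    | succ j ih =>
      intro hj
      have ihj := ih (by omega)
      by_cases h1 : j + 1 < m
      · have hv : (z ^ j) (m+1) = m+1+j := by rw [ihj, if_pos (by omega)]
        rw [pow_succ', Equiv.Perm.mul_apply, hv, Z1 (m+1+j) (by omega) (by omega) (by omega),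
          if_pos h1]
        omega
      · by_cases h2 : j + 1 = m
        · have hv : (z ^ j) (m+1) = 2*m := by rw [ihj, if_pos (by omega)]; omega
          rw [pow_succ', Equiv.Perm.mul_apply, hv, Z3, if_neg (by omega), if_pos (by omega)]
          omega
        · by_cases h3 : j + 1 < 2*m
          · have hv : (z ^ j) (m+1) = 2*m+1+j := by
              rw [ihj, if_neg (by omega), if_pos (by omega)]
            rw [pow_succ', Equiv.Perm.mul_apply, hv,
              Z4 (2*m+1+j) (by omega) (by omega) (by omega), if_neg (by omega), if_pos h3]
            omega
          · have hv : (z ^ j) (m+1) = 4*m := by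
              rw [ihj, if_neg (by omega), if_pos (by omega)]; omega
            rw [pow_succ', Equiv.Perm.mul_apply, hv, Z6, if_neg (by omega), if_neg (by omega)]
  -- coverage
  have C : ∀ c, 1 ≤ c → c ≤ 4*m →
      (∃ j, j < 2*m ∧ (z ^ j) 1 = c) ∨ (∃ j, j < 2*m ∧ (z ^ j) (m+1) = c) := by
    intro c h1 h2
    by_cases hc1 : c ≤ m
    · exact Or.inl ⟨c - 1, by omega, by rw [SA (c-1) (by omega), if_pos (by omega)]; omega⟩
    · by_cases hc2 : c ≤ 2*m
      · exact Or.inr ⟨c - (m+1), by omega,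
          by rw [SB (c-(m+1)) (by omega), if_pos (by omega)]; omega⟩
      · by_cases hc3 : c ≤ 3*m
        · exact Or.inl ⟨c - (m+1), by omega,
            by rw [SA (c-(m+1)) (by omega), if_neg (by omega), if_pos (by omega)]; omega⟩
        · exact Or.inr ⟨c - (2*m+1), by omega,
            by rw [SB (c-(2*m+1)) (by omega), if_neg (by omega), if_pos (by omega)]; omega⟩
  -- z ^ (2m) = 1
  have hz2m : z ^ (2*m) = 1 := by
    refine Equiv.ext fun a => ?_
    rw [Equiv.Perm.one_apply]
    by_cases ha : 1 ≤ a ∧ a ≤ 4*m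
    · have hA : (z ^ (2*m)) 1 = 1 := by
        rw [SA (2*m) le_rfl, if_neg (by omega), if_neg (by omega)]
      have hB : (z ^ (2*m)) (m+1) = m+1 := by
        rw [SB (2*m) le_rfl, if_neg (by omega), if_neg (by omega)]
      rcases C a ha.1 ha.2 with ⟨j, hj, hv⟩ | ⟨j, hj, hv⟩
      · rw [← hv, ← Equiv.Perm.mul_apply, ← pow_add, Nat.add_comm, pow_add,
          Equiv.Perm.mul_apply, hA]
      · rw [← hv, ← Equiv.Perm.mul_apply, ← pow_add, Nat.add_comm, pow_add,
          Equiv.Perm.mul_apply, hB]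
    · have hya : yPerm k a = a := by
        simp only [yPerm, Equiv.Perm.mul_apply]
        rw [List.formPerm_apply_of_notMem (l := List.range' (k+1) k) (x := a)
            (by rw [List.mem_range'_1]; omega),
          List.formPerm_apply_of_notMem (l := List.range' 1 k) (x := a)
            (by rw [List.mem_range'_1]; omega)]
      have hxa : xPerm k a = a := by
        rw [hx, Equiv.Perm.mul_apply,
          Equiv.swap_apply_of_ne_of_ne (a := m+1) (b := 2*m+1) (x := a) (by omega) (by omega),
          Equiv.swap_apply_of_ne_of_ne (a := 1) (b := 3*m+1) (x := a) (by omega) (by omega)]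
      exact fix_pow (show z a = a by rw [hz, Equiv.Perm.mul_apply, hya, hxa]) _
  -- order of x
  have hdisj : (Equiv.swap 1 (3*m+1)).Disjoint (Equiv.swap (m+1) (2*m+1)) := by
    intro a
    by_cases h : a = 1 ∨ a = 3*m+1
    · exact Or.inr (Equiv.swap_apply_of_ne_of_ne (by omega) (by omega))
    · exact Or.inl (Equiv.swap_apply_of_ne_of_ne (by omega) (by omega))
  have hx2 : (xPerm k) ^ 2 = 1 := by
    rw [hx, Commute.mul_pow hdisj.commute, sq, sq, Equiv.swap_mul_self, Equiv.swap_mul_self,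
      one_mul]
  have hxne : xPerm k ≠ 1 := by
    intro h
    have h1 : xPerm k (m+1) = m+1 := by rw [h]; rfl
    rw [hx, Equiv.Perm.mul_apply, Equiv.swap_apply_left,
      Equiv.swap_apply_of_ne_of_ne (a := 1) (b := 3*m+1) (x := 2*m+1)
        (by omega) (by omega)] at h1
    omega
  have hordx : orderOf (xPerm k) = 2 := orderOf_eq_prime hx2 hxne
  -- order of y
  have hyd : (List.range' 1 k).formPerm.Disjoint (List.range' (k+1) k).formPerm := by
    intro a
    by_cases h : a < k + 1
    · exact Or.inr (List.formPerm_apply_of_notMem (by rw [List.mem_range'_1]; omega))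
    · exact Or.inl (List.formPerm_apply_of_notMem (by rw [List.mem_range'_1]; omega))
  have hyk : yPerm k ^ k = 1 := by
    have e1 : (List.range' 1 k).formPerm ^ k = 1 := by
      have := List.formPerm_pow_length_eq_one_of_nodup (l := List.range' 1 k) (List.nodup_range' (s := 1) (n := k))
      rwa [List.length_range'] at this
    have e2 : (List.range' (k+1) k).formPerm ^ k = 1 := by
      have := List.formPerm_pow_length_eq_one_of_nodup (l := List.range' (k+1) k) (List.nodup_range' (s := k+1) (n := k))
      rwa [List.length_range'] at this
    rw [yPerm, Commute.mul_pow hyd.commute, e1, e2, one_mul]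
  have hordy : orderOf (yPerm k) = k := by
    refine (orderOf_eq_iff (by omega)).mpr ⟨hyk, ?_⟩
    intro d hd hd0 h
    have h1 : (yPerm k ^ d) 1 = 1 := by rw [h]; rfl
    rw [yPerm, Commute.mul_pow hyd.commute, Equiv.Perm.mul_apply,
      fix_pow (List.formPerm_apply_of_notMem (l := List.range' (k+1) k) (x := 1)
        (by rw [List.mem_range'_1]; omega)) d,
      rfp 1 k 1 d (by omega) le_rfl (by omega),
      Nat.mod_eq_of_lt (by omega)] at h1
    omega
  refine ⟨hordx, hordy, 1, m+1, Set.mem_Icc.mpr ⟨by omega, by omega⟩,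
    Set.mem_Icc.mpr ⟨by omega, by omega⟩, ?_, ?_⟩
  · rintro ⟨n, hn⟩
    have hzn : z ^ n = z ^ (n % ((2*m : ℕ) : ℤ)) := zpow_eq_zpow_emod' n hz2m
    have hr0 : 0 ≤ n % ((2*m : ℕ) : ℤ) := Int.emod_nonneg n (by exact_mod_cast by omega)
    have hrlt : n % ((2*m : ℕ) : ℤ) < ((2*m : ℕ) : ℤ) :=
      Int.emod_lt_of_pos n (by exact_mod_cast by omega)
    lift n % ((2*m : ℕ) : ℤ) to ℕ using hr0 with r hr
    rw [hzn, zpow_natCast] at hn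
    rw [SA r (by exact_mod_cast hrlt.le)] at hn
    have hrlt' : r < 2*m := by exact_mod_cast hrlt
    split_ifs at hn <;> omega
  · intro c hc
    rw [Set.mem_Icc] at hc
    rcases C c hc.1 (by omega) with ⟨j, hj, hv⟩ | ⟨j, hj, hv⟩
    · exact Or.inl ⟨(j : ℤ), by rw [zpow_natCast]; exact hv⟩
    · exact Or.inr ⟨(j : ℤ), by rw [zpow_natCast]; exact hv⟩
end

section
/- For every even k ≥ 2, the element xy, with x = (1, 3k/2+1)(k/2+1, k+1) and y = (1,2,…,k)(k+1,…,2k) in S_{2k}, acts on {1,…,2k} with exactly two orbits, each of size k. -/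
lemma formPerm_range'_apply (s n i : ℕ) (hi : i < n) :
    (List.range' s n).formPerm (s + i) = s + (i + 1) % n := by
  have h := List.formPerm_apply_getElem (List.range' s n) (List.nodup_range' (s := s) (n := n)) i
    (by simpa using hi)
  simpa [List.getElem_range', List.length_range'] using h

lemma formPerm_range'_apply_of_not_mem (s n a : ℕ) (h : a < s ∨ s + n ≤ a) :
    (List.range' s n).formPerm a = a := by
  apply List.formPerm_apply_of_notMem
  simp only [List.mem_range']
  rintro ⟨i, hi, rfl⟩
  omega

lemma y_apply_lo (m a : ℕ) (h1 : 1 ≤ a) (h2 : a < 2 * m) :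
    yPerm (2 * m) a = a + 1 := by
  have hg : (List.range' (2 * m + 1) (2 * m)).formPerm a = a :=
    formPerm_range'_apply_of_not_mem _ _ _ (by omega)
  have hf : (List.range' 1 (2 * m)).formPerm (1 + (a - 1)) = 1 + (a - 1 + 1) % (2 * m) :=
    formPerm_range'_apply 1 (2 * m) (a - 1) (by omega)
  have e1 : 1 + (a - 1) = a := by omega
  have e2 : (a - 1 + 1) % (2 * m) = a := by
    rw [Nat.mod_eq_of_lt (by omega)]; omega
  rw [e1, e2] at hf
  rw [yPerm]
  simp only [Equiv.Perm.mul_apply, hg, hf]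
  omega

lemma y_apply_k (m : ℕ) (hm : 1 ≤ m) : yPerm (2 * m) (2 * m) = 1 := by
  have hg : (List.range' (2 * m + 1) (2 * m)).formPerm (2 * m) = 2 * m :=
    formPerm_range'_apply_of_not_mem _ _ _ (by omega)
  have hf : (List.range' 1 (2 * m)).formPerm (1 + (2 * m - 1)) = 1 + (2 * m - 1 + 1) % (2 * m) :=
    formPerm_range'_apply 1 (2 * m) (2 * m - 1) (by omega)
  have e1 : 1 + (2 * m - 1) = 2 * m := by omega
  have e2 : (2 * m - 1 + 1) % (2 * m) = 0 := by
    have : 2 * m - 1 + 1 = 2 * m := by omega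
    simp [this]
  rw [e1, e2] at hf
  rw [yPerm]
  simp only [Equiv.Perm.mul_apply, hg, hf]

lemma y_apply_hi (m a : ℕ) (h1 : 2 * m + 1 ≤ a) (h2 : a < 4 * m) :
    yPerm (2 * m) a = a + 1 := by
  have hf : (List.range' (2 * m + 1) (2 * m)).formPerm (2 * m + 1 + (a - (2 * m + 1)))
      = 2 * m + 1 + (a - (2 * m + 1) + 1) % (2 * m) :=
    formPerm_range'_apply _ _ _ (by omega)
  have e1 : 2 * m + 1 + (a - (2 * m + 1)) = a := by omega
  have e2 : (a - (2 * m + 1) + 1) % (2 * m) = a - 2 * m := by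
    rw [Nat.mod_eq_of_lt (by omega)]; omega
  rw [e1, e2] at hf
  have e3 : 2 * m + 1 + (a - 2 * m) = a + 1 := by omega
  rw [e3] at hf
  rw [yPerm]
  simp only [Equiv.Perm.mul_apply, hf]
  exact formPerm_range'_apply_of_not_mem _ _ _ (by omega)

lemma y_apply_2k (m : ℕ) (hm : 1 ≤ m) : yPerm (2 * m) (4 * m) = 2 * m + 1 := by
  have hf : (List.range' (2 * m + 1) (2 * m)).formPerm (2 * m + 1 + (2 * m - 1))
      = 2 * m + 1 + (2 * m - 1 + 1) % (2 * m) :=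
    formPerm_range'_apply _ _ _ (by omega)
  have e1 : 2 * m + 1 + (2 * m - 1) = 4 * m := by omega
  have e2 : (2 * m - 1 + 1) % (2 * m) = 0 := by
    have : 2 * m - 1 + 1 = 2 * m := by omega
    simp [this]
  rw [e1, e2] at hf
  simp only [Nat.add_zero] at hf
  rw [yPerm]
  simp only [Equiv.Perm.mul_apply, hf]
  exact formPerm_range'_apply_of_not_mem _ _ _ (by omega)

lemma x_eq (m : ℕ) :
    xPerm (2 * m) = Equiv.swap 1 (3 * m + 1) * Equiv.swap (m + 1) (2 * m + 1) := by
  rw [xPerm]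
  congr 2 <;> omega

lemma x_apply_of_ne (m a : ℕ) (h1 : a ≠ 1) (h2 : a ≠ 3 * m + 1) (h3 : a ≠ m + 1)
    (h4 : a ≠ 2 * m + 1) : xPerm (2 * m) a = a := by
  rw [x_eq]
  simp only [Equiv.Perm.mul_apply]
  rw [Equiv.swap_apply_of_ne_of_ne h3 h4, Equiv.swap_apply_of_ne_of_ne h1 h2]

-- z := xPerm (2m) * yPerm (2m)

lemma z_apply_mid (m a : ℕ) (hm : 1 ≤ m) (h1 : 1 ≤ a) (h4 : a < 4 * m)
    (hne1 : a ≠ m) (hne2 : a ≠ 2 * m) (hne3 : a ≠ 3 * m) :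
    (xPerm (2 * m) * yPerm (2 * m)) a = a + 1 := by
  rw [Equiv.Perm.mul_apply]
  rcases lt_or_ge a (2 * m) with h | h
  · rw [y_apply_lo m a h1 h]
    exact x_apply_of_ne m _ (by omega) (by omega) (by omega) (by omega)
  · rw [y_apply_hi m a (by omega) h4]
    exact x_apply_of_ne m _ (by omega) (by omega) (by omega) (by omega)

lemma z_apply_m (m : ℕ) (hm : 1 ≤ m) :
    (xPerm (2 * m) * yPerm (2 * m)) m = 2 * m + 1 := by
  rw [Equiv.Perm.mul_apply, y_apply_lo m m (by omega) (by omega), x_eq]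
  simp only [Equiv.Perm.mul_apply]
  have h1 : Equiv.swap (m + 1) (2 * m + 1) (m + 1) = 2 * m + 1 := Equiv.swap_apply_left _ _
  rw [h1]
  exact Equiv.swap_apply_of_ne_of_ne (by omega) (by omega)

lemma z_apply_2m (m : ℕ) (hm : 1 ≤ m) :
    (xPerm (2 * m) * yPerm (2 * m)) (2 * m) = 3 * m + 1 := by
  rw [Equiv.Perm.mul_apply, y_apply_k m hm, x_eq]
  simp only [Equiv.Perm.mul_apply]
  have h1 : Equiv.swap (m + 1) (2 * m + 1) 1 = 1 :=
    Equiv.swap_apply_of_ne_of_ne (by omega) (by omega)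
  rw [h1]
  exact Equiv.swap_apply_left _ _

lemma z_apply_3m (m : ℕ) (hm : 1 ≤ m) :
    (xPerm (2 * m) * yPerm (2 * m)) (3 * m) = 1 := by
  rw [Equiv.Perm.mul_apply, y_apply_hi m (3 * m) (by omega) (by omega), x_eq]
  simp only [Equiv.Perm.mul_apply]
  have h1 : Equiv.swap (m + 1) (2 * m + 1) (3 * m + 1) = 3 * m + 1 :=
    Equiv.swap_apply_of_ne_of_ne (by omega) (by omega)
  rw [h1]
  exact Equiv.swap_apply_right _ _

lemma z_apply_4m (m : ℕ) (hm : 1 ≤ m) :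
    (xPerm (2 * m) * yPerm (2 * m)) (4 * m) = m + 1 := by
  rw [Equiv.Perm.mul_apply, y_apply_2k m hm, x_eq]
  simp only [Equiv.Perm.mul_apply]
  have h1 : Equiv.swap (m + 1) (2 * m + 1) (2 * m + 1) = m + 1 := Equiv.swap_apply_right _ _
  rw [h1]
  exact Equiv.swap_apply_of_ne_of_ne (by omega) (by omega)

lemma orbit_zpowers_eq (z : Equiv.Perm ℕ) (a n : ℕ) (hn : 0 < n) (h : (z ^ n) a = a) :
    MulAction.orbit (Subgroup.zpowers z) a = (fun j => (z ^ j) a) '' Set.Iio n := by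
  have h' : (z ^ (n : ℤ)) a = a := by rw [zpow_natCast]; exact h
  ext b
  constructor
  · rintro ⟨⟨g, hg⟩, rfl⟩
    obtain ⟨i, rfl⟩ := Subgroup.mem_zpowers_iff.mp hg
    have hper : z ^ i = z ^ (i % (n : ℤ)) * (z ^ (n : ℤ)) ^ (i / (n : ℤ)) := by
      rw [← zpow_mul, ← zpow_add]
      congr 1
      exact (Int.emod_add_mul_ediv i n).symm
    have hfix : ((z ^ (n : ℤ)) ^ (i / (n : ℤ))) a = a :=
      Equiv.Perm.zpow_apply_eq_self_of_apply_eq_self h' _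
    have hnn : 0 ≤ i % (n : ℤ) := Int.emod_nonneg i (by exact_mod_cast hn.ne')
    have hlt : i % (n : ℤ) < n := Int.emod_lt_of_pos i (by exact_mod_cast hn)
    refine ⟨(i % (n : ℤ)).toNat, Set.mem_Iio.mpr (by omega), ?_⟩
    show (z ^ ((i % (n : ℤ)).toNat)) a = (z ^ i) a
    rw [← zpow_natCast, Int.toNat_of_nonneg hnn, hper, Equiv.Perm.mul_apply, hfix]
  · rintro ⟨j, _, rfl⟩
    exact ⟨⟨z ^ j, Subgroup.mem_zpowers_iff.mpr ⟨(j : ℤ), (zpow_natCast z j).symm⟩⟩, rfl⟩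

lemma iter1 (m : ℕ) (hm : 1 ≤ m) : ∀ j < 2 * m,
    ((xPerm (2 * m) * yPerm (2 * m)) ^ j) 1 = if j < m then j + 1 else j + m + 1 := by
  intro j hj
  induction j with
  | zero => rw [pow_zero, if_pos (by omega : (0:ℕ) < m)]; rfl
  | succ j ih =>
    have ih' := ih (by omega)
    rw [pow_succ', Equiv.Perm.mul_apply, ih']
    rcases lt_trichotomy (j + 1) m with h | h | h
    · rw [if_pos (by omega), if_pos h]
      exact z_apply_mid m (j + 1) hm (by omega) (by omega) (by omega) (by omega) (by omega)
    · rw [if_pos (by omega), if_neg (by omega)]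
      have : j + 1 = m := h
      rw [this, z_apply_m m hm]
      omega
    · rw [if_neg (by omega), if_neg (by omega)]
      have := z_apply_mid m (j + m + 1) hm (by omega) (by omega) (by omega) (by omega) (by omega)
      rw [this]
      omega

lemma iter2 (m : ℕ) (hm : 1 ≤ m) : ∀ j < 2 * m,
    ((xPerm (2 * m) * yPerm (2 * m)) ^ j) (m + 1)
      = if j < m then m + 1 + j else j + 2 * m + 1 := by
  intro j hj
  induction j with
  | zero => rw [pow_zero, if_pos (by omega : (0:ℕ) < m)]; rfl
  | succ j ih =>
    have ih' := ih (by omega)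
    rw [pow_succ', Equiv.Perm.mul_apply, ih']
    rcases lt_trichotomy (j + 1) m with h | h | h
    · rw [if_pos (by omega), if_pos h]
      have := z_apply_mid m (m + 1 + j) hm (by omega) (by omega) (by omega) (by omega) (by omega)
      rw [this]
      omega
    · rw [if_pos (by omega), if_neg (by omega)]
      have e : m + 1 + j = 2 * m := by omega
      rw [e, z_apply_2m m hm]
      omega
    · rw [if_neg (by omega), if_neg (by omega)]
      have := z_apply_mid m (j + 2 * m + 1) hm (by omega) (by omega) (by omega) (by omega) (by omega)
      rw [this]
      omega

lemma ret1 (m : ℕ) (hm : 1 ≤ m) :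
    ((xPerm (2 * m) * yPerm (2 * m)) ^ (2 * m)) 1 = 1 := by
  set z := xPerm (2 * m) * yPerm (2 * m) with hz
  have e : 2 * m = (2 * m - 1) + 1 := by omega
  rw [e, pow_succ', Equiv.Perm.mul_apply, hz, iter1 m hm (2 * m - 1) (by omega)]
  rw [if_neg (by omega)]
  have : 2 * m - 1 + m + 1 = 3 * m := by omega
  rw [this, z_apply_3m m hm]

lemma ret2 (m : ℕ) (hm : 1 ≤ m) :
    ((xPerm (2 * m) * yPerm (2 * m)) ^ (2 * m)) (m + 1) = m + 1 := by
  set z := xPerm (2 * m) * yPerm (2 * m) with hz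
  have e : 2 * m = (2 * m - 1) + 1 := by omega
  rw [e, pow_succ', Equiv.Perm.mul_apply, hz, iter2 m hm (2 * m - 1) (by omega)]
  rw [if_neg (by omega)]
  have : 2 * m - 1 + 2 * m + 1 = 4 * m := by omega
  rw [this, z_apply_4m m hm]

lemma orbit1_eq (m : ℕ) (hm : 1 ≤ m) :
    MulAction.orbit (Subgroup.zpowers (xPerm (2 * m) * yPerm (2 * m))) 1
      = Set.Icc 1 m ∪ Set.Icc (2 * m + 1) (3 * m) := by
  rw [orbit_zpowers_eq _ 1 (2 * m) (by omega) (ret1 m hm)]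
  ext b
  simp only [Set.mem_image, Set.mem_Iio, Set.mem_union, Set.mem_Icc]
  constructor
  · rintro ⟨j, hj, rfl⟩
    rw [iter1 m hm j hj]
    split <;> omega
  · intro hb
    rcases le_or_gt b m with h | h
    · exact ⟨b - 1, by omega, by rw [iter1 m hm (b - 1) (by omega), if_pos (by omega)]; omega⟩
    · exact ⟨b - m - 1, by omega, by
        rw [iter1 m hm (b - m - 1) (by omega), if_neg (by omega)]; omega⟩

lemma orbit2_eq (m : ℕ) (hm : 1 ≤ m) :
    MulAction.orbit (Subgroup.zpowers (xPerm (2 * m) * yPerm (2 * m))) (m + 1)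
      = Set.Icc (m + 1) (2 * m) ∪ Set.Icc (3 * m + 1) (4 * m) := by
  rw [orbit_zpowers_eq _ (m + 1) (2 * m) (by omega) (ret2 m hm)]
  ext b
  simp only [Set.mem_image, Set.mem_Iio, Set.mem_union, Set.mem_Icc]
  constructor
  · rintro ⟨j, hj, rfl⟩
    rw [iter2 m hm j hj]
    split <;> omega
  · intro hb
    rcases le_or_gt b (2 * m) with h | h
    · exact ⟨b - m - 1, by omega, by
        rw [iter2 m hm (b - m - 1) (by omega), if_pos (by omega)]; omega⟩
    · exact ⟨b - 2 * m - 1, by omega, by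
        rw [iter2 m hm (b - 2 * m - 1) (by omega), if_neg (by omega)]; omega⟩

lemma card_union_Icc (a b c d : ℕ) (h : b < c) :
    Nat.card (Set.Icc a b ∪ Set.Icc c d : Set ℕ) = (b + 1 - a) + (d + 1 - c) := by
  have hdisj : Disjoint (Finset.Icc a b) (Finset.Icc c d) := by
    rw [Finset.disjoint_left]
    intro x hx hx'
    rw [Finset.mem_Icc] at hx hx'
    omega
  have hco : (Set.Icc a b ∪ Set.Icc c d : Set ℕ) = ↑(Finset.Icc a b ∪ Finset.Icc c d) := by
    simp
  rw [hco, Nat.card_coe_set_eq, Set.ncard_coe_finset,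
    Finset.card_union_of_disjoint hdisj, Nat.card_Icc, Nat.card_Icc]

/-- For even `k ≥ 2`, the cyclic group `⟨xy⟩` has exactly two orbits on
`{1,…,2k}`, each of size `k`. -/
theorem stmt_17 (k : ℕ) (hk : 2 ≤ k) (hk2 : Even k) :
    ∃ a b : ℕ,
      Disjoint (MulAction.orbit (Subgroup.zpowers (xPerm k * yPerm k)) a)
        (MulAction.orbit (Subgroup.zpowers (xPerm k * yPerm k)) b) ∧
      MulAction.orbit (Subgroup.zpowers (xPerm k * yPerm k)) a ∪
        MulAction.orbit (Subgroup.zpowers (xPerm k * yPerm k)) b = Set.Icc 1 (2 * k) ∧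
      Nat.card (MulAction.orbit (Subgroup.zpowers (xPerm k * yPerm k)) a) = k ∧
      Nat.card (MulAction.orbit (Subgroup.zpowers (xPerm k * yPerm k)) b) = k := by
  obtain ⟨m, rfl⟩ : ∃ m, k = 2 * m := ⟨k / 2, by obtain ⟨t, rfl⟩ := hk2; omega⟩
  have hm : 1 ≤ m := by omega
  refine ⟨1, m + 1, ?_, ?_, ?_, ?_⟩
  · rw [orbit1_eq m hm, orbit2_eq m hm]
    rw [Set.disjoint_left]
    intro b hb hb'
    simp only [Set.mem_union, Set.mem_Icc] at hb hb'
    omega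
  · rw [orbit1_eq m hm, orbit2_eq m hm]
    ext b
    simp only [Set.mem_union, Set.mem_Icc]
    omega
  · rw [orbit1_eq m hm]
    have := card_union_Icc 1 m (2 * m + 1) (3 * m) (by omega)
    rw [this]; omega
  · rw [orbit2_eq m hm]
    have := card_union_Icc (m + 1) (2 * m) (3 * m + 1) (4 * m) (by omega)
    rw [this]; omega
end
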